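/- arXiv:2307.14716 — 5 statements merged into one kernel-verified Lean document; each statement's English description precedes it below -/
import Mathlib

section
/- Let (x,y,θ) : I → ℝ³ be a solution of x' = cos θ, y' = sin θ, θ' = −y cos θ sin²θ / (1+y²) defined on an interval I, with θ nonconstant. Then θ(t) ≠ kπ/2 for all t ∈ I and all integers k. -/
open Real Set

theorem nil_nonconstant_theta_avoids_half_multiples_of_pi
    (I : Set ℝ) (hI : Convex ℝ I) (x y θ : ℝ → ℝ)
    (hx : ∀ t ∈ I, HasDerivAt x (Real.cos (θ t)) t)
    (hy : ∀ t ∈ I, HasDerivAt y (Real.sin (θ t)) t)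
    (hθ : ∀ t ∈ I,
      HasDerivAt θ (-(y t) * Real.cos (θ t) * Real.sin (θ t) ^ 2 / (1 + (y t) ^ 2)) t)
    (hnc : ¬ ∀ s ∈ I, ∀ t ∈ I, θ s = θ t) :
    ∀ t ∈ I, ∀ k : ℤ, θ t ≠ k * π / 2 := by
  intro t₀ ht₀ k hk
  set θ' : ℝ → ℝ := fun t => -(y t) * Real.cos (θ t) * Real.sin (θ t) ^ 2 / (1 + (y t) ^ 2)
    with hθ'def
  set w : ℝ → ℝ := fun t => Real.sin (2 * θ t) with hwdef
  set w' : ℝ → ℝ := fun t => Real.cos (2 * θ t) * (2 * θ' t) with hw'def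
  have hw0 : w t₀ = 0 := by
    have : 2 * θ t₀ = (k : ℝ) * π := by rw [hk]; ring
    simp only [hwdef, this]
    exact Real.sin_int_mul_pi k
  have hwd : ∀ t ∈ I, HasDerivAt w (w' t) t := by
    intro t ht
    exact ((hθ t ht).const_mul 2).sin
  -- key bound
  have hbound : ∀ t ∈ I, |w' t| ≤ (1/2) * |w t| := by
    intro t ht
    have h1 : |Real.cos (2 * θ t)| ≤ 1 := Real.abs_cos_le_one _
    have h2 : |Real.sin (θ t)| ≤ 1 := Real.abs_sin_le_one _
    have hy2 : (0:ℝ) < 1 + (y t)^2 := by positivity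
    have hyb : |y t| / (1 + (y t)^2) ≤ 1/2 := by
      rw [div_le_iff₀ hy2]
      nlinarith [sq_nonneg (|y t| - 1), abs_nonneg (y t), sq_abs (y t)]
    have hsin2 : w t = 2 * Real.sin (θ t) * Real.cos (θ t) := by
      simp only [hwdef]; exact Real.sin_two_mul _
    have habs : |θ' t| ≤ (1/4) * |w t| := by
      have : |θ' t| = |y t| / (1 + (y t)^2) * (|Real.cos (θ t)| * |Real.sin (θ t)|^2) := by
        simp only [hθ'def]
        rw [abs_div, abs_of_pos hy2]
        rw [abs_mul, abs_mul, abs_neg, ← pow_abs]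
        ring
      rw [this, hsin2]
      have h3 : |Real.cos (θ t)| * |Real.sin (θ t)| ^ 2
          = |Real.sin (θ t) * Real.cos (θ t)| * |Real.sin (θ t)| := by
        rw [abs_mul]; ring
      rw [h3]
      have h4 : |Real.sin (θ t) * Real.cos (θ t)| * |Real.sin (θ t)|
          ≤ |Real.sin (θ t) * Real.cos (θ t)| := by
        nlinarith [abs_nonneg (Real.sin (θ t) * Real.cos (θ t))]
      have h5 : |2 * Real.sin (θ t) * Real.cos (θ t)|
          = 2 * |Real.sin (θ t) * Real.cos (θ t)| := by
        rw [show 2 * Real.sin (θ t) * Real.cos (θ t)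
            = 2 * (Real.sin (θ t) * Real.cos (θ t)) by ring, abs_mul, abs_two]
      rw [h5]
      nlinarith [abs_nonneg (Real.sin (θ t) * Real.cos (θ t)),
        div_nonneg (abs_nonneg (y t)) hy2.le, h2, hyb, h4,
        mul_nonneg (abs_nonneg (Real.sin (θ t) * Real.cos (θ t))) (abs_nonneg (Real.sin (θ t)))]
    calc |w' t| = |Real.cos (2 * θ t)| * (2 * |θ' t|) := by
          simp only [hw'def]
          rw [abs_mul, abs_mul, abs_two]
      _ ≤ 1 * (2 * |θ' t|) := by
          have := abs_nonneg (θ' t)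
          nlinarith
      _ = 2 * |θ' t| := by ring
      _ ≤ (1/2) * |w t| := by nlinarith
  -- w vanishes on all of I, by Gronwall in both time directions
  have hwzero : ∀ t ∈ I, w t = 0 := by
    intro t ht
    rcases le_total t₀ t with hle | hle
    · have hsub : Icc t₀ t ⊆ I := hI.ordConnected.out ht₀ ht
      have key := norm_le_gronwallBound_of_norm_deriv_right_le (f := w) (f' := w')
        (δ := 0) (K := 1/2) (ε := 0) (a := t₀) (b := t)
        (fun s hs => ((hwd s (hsub hs)).continuousAt).continuousWithinAt)
        (fun s hs => ((hwd s (hsub (Ico_subset_Icc_self hs))).hasDerivWithinAt))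
        (by simp [hw0])
        (fun s hs => by
          have := hbound s (hsub (Ico_subset_Icc_self hs))
          simpa [Real.norm_eq_abs] using this)
      have := key t (right_mem_Icc.2 hle)
      rw [gronwallBound_ε0_δ0] at this
      simpa [Real.norm_eq_abs] using le_antisymm this (abs_nonneg _)
    · -- backward: use g s = w (t + t₀ - s) on [t, t₀]
      have hsub : Icc t t₀ ⊆ I := hI.ordConnected.out ht ht₀
      have hmem : ∀ s ∈ Icc t t₀, t + t₀ - s ∈ Icc t t₀ := by
        intro s hs
        constructor <;> [linarith [hs.2]; linarith [hs.1]]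
      have hgd : ∀ s ∈ Icc t t₀, HasDerivAt (fun s => w (t + t₀ - s))
          (-(w' (t + t₀ - s))) s := by
        intro s hs
        have h1 : HasDerivAt (fun s : ℝ => t + t₀ - s) (-1) s := by
          simpa using (hasDerivAt_id s).const_sub (t + t₀)
        have := (hwd _ (hsub (hmem s hs))).comp s h1
        rw [show -(w' (t + t₀ - s)) = w' (t + t₀ - s) * -1 by ring]
        exact this
      have key := norm_le_gronwallBound_of_norm_deriv_right_le
        (f := fun s => w (t + t₀ - s)) (f' := fun s => -(w' (t + t₀ - s)))
        (δ := 0) (K := 1/2) (ε := 0) (a := t) (b := t₀)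
        (fun s hs => ((hgd s hs).continuousAt).continuousWithinAt)
        (fun s hs => ((hgd s (Ico_subset_Icc_self hs)).hasDerivWithinAt))
        (by simp [hw0])
        (fun s hs => by
          have := hbound _ (hsub (hmem s (Ico_subset_Icc_self hs)))
          simpa [Real.norm_eq_abs] using this)
      have := key t₀ (right_mem_Icc.2 hle)
      rw [gronwallBound_ε0_δ0] at this
      have h0 : w (t + t₀ - t₀) = 0 := by
        simpa [Real.norm_eq_abs] using le_antisymm this (abs_nonneg _)
      simpa using h0
  -- hence θ' = 0 on I
  have hderiv0 : ∀ t ∈ I, θ' t = 0 := by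
    intro t ht
    have hw : Real.sin (2 * θ t) = 0 := hwzero t ht
    rw [Real.sin_two_mul] at hw
    have h0 : Real.sin (θ t) * Real.cos (θ t) = 0 := by linarith
    have : Real.cos (θ t) * Real.sin (θ t) ^ 2 = 0 := by
      calc Real.cos (θ t) * Real.sin (θ t) ^ 2
          = Real.sin (θ t) * Real.cos (θ t) * Real.sin (θ t) := by ring
        _ = 0 := by rw [h0]; ring
    simp only [hθ'def]
    rw [mul_assoc, this, mul_zero, zero_div]
  -- θ constant on I, contradiction
  exfalso
  apply hnc
  intro s hs t ht
  have := hI.norm_image_sub_le_of_norm_hasDerivWithin_le (f := θ) (f' := fun t => θ' t)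
    (C := 0)
    (fun u hu => (hθ u hu).hasDerivWithinAt)
    (fun u hu => by simp [Real.norm_eq_abs, hderiv0 u hu]) ht hs
  simp only [zero_mul, Real.norm_eq_abs] at this
  have := le_antisymm this (abs_nonneg _)
  linarith [abs_eq_zero.1 this, sub_eq_zero.1 (abs_eq_zero.1 this)]
end

section
/- Along any solution (x,y,θ) of the system x' = cos θ, y' = sin θ, θ' = −y cos θ sin²θ / (1+y²) with θ(t) ∈ (0, π/2) for all t, the function J(t) = (1 + y(t)²) tan²θ(t) is constant. -/
open Real Set

theorem nil_first_integral (x y θ : ℝ → ℝ)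
    (hx : ∀ t, HasDerivAt x (Real.cos (θ t)) t)
    (hy : ∀ t, HasDerivAt y (Real.sin (θ t)) t)
    (hθ : ∀ t, HasDerivAt θ (-(y t) * Real.cos (θ t) * Real.sin (θ t) ^ 2 / (1 + (y t) ^ 2)) t)
    (hrange : ∀ t, θ t ∈ Set.Ioo 0 (π / 2)) :
    ∀ s t : ℝ, (1 + (y s) ^ 2) * Real.tan (θ s) ^ 2 = (1 + (y t) ^ 2) * Real.tan (θ t) ^ 2 := by
  have key : ∀ t, HasDerivAt (fun t => (1 + (y t) ^ 2) * Real.tan (θ t) ^ 2) 0 t := by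
    intro t
    have hc : Real.cos (θ t) ≠ 0 := by
      have := (hrange t)
      have := Real.cos_pos_of_mem_Ioo ⟨by nlinarith [this.1, Real.pi_pos], this.2⟩
      linarith
    have hden : (1 : ℝ) + (y t) ^ 2 ≠ 0 := by positivity
    have h1 : HasDerivAt (fun t => 1 + (y t) ^ 2) (2 * y t * Real.sin (θ t)) t := by
      simpa [mul_comm, mul_assoc] using ((hy t).pow 2).const_add 1
    have htan : HasDerivAt (fun t => Real.tan (θ t))
        (1 / Real.cos (θ t) ^ 2 *
          (-(y t) * Real.cos (θ t) * Real.sin (θ t) ^ 2 / (1 + (y t) ^ 2))) t :=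
      (Real.hasDerivAt_tan hc).comp t (hθ t)
    have h2 : HasDerivAt (fun t => Real.tan (θ t) ^ 2)
        (2 * Real.tan (θ t) *
          (1 / Real.cos (θ t) ^ 2 *
            (-(y t) * Real.cos (θ t) * Real.sin (θ t) ^ 2 / (1 + (y t) ^ 2)))) t := by
      simpa [mul_comm, mul_assoc] using htan.fun_pow 2
    have h : HasDerivAt (fun t => (1 + (y t) ^ 2) * Real.tan (θ t) ^ 2) _ t := h1.fun_mul h2
    convert h using 1
    rw [Real.tan_eq_sin_div_cos]
    field_simp
    ring
  intro s t
  have hconst : ∀ a b : ℝ,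
      (fun t => (1 + (y t) ^ 2) * Real.tan (θ t) ^ 2) a
        = (fun t => (1 + (y t) ^ 2) * Real.tan (θ t) ^ 2) b := by
    intro a b
    exact is_const_of_deriv_eq_zero (fun u => (key u).differentiableAt)
      (fun u => (key u).deriv) a b
  exact hconst s t
end

section
/- Let a > 0, c₁ ∈ ℝ, and define y(t) = f⁻¹(√a·t + c₁) where f(t) = (1/2)(1+a) ln(t + √(1+a+t²)) + (1/2) t √(1+a+t²). Then y is differentiable and satisfies the ODE (1 + y(t)²)·y'(t)²/(1 − y'(t)²) = a, i.e. y'(t)² = a/(1 + a + y(t)²). -/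
open Real Filter

noncomputable def Fnil (a : ℝ) : ℝ → ℝ := fun t =>
  (1 / 2) * (1 + a) * Real.log (t + Real.sqrt (1 + a + t ^ 2)) +
  (1 / 2) * t * Real.sqrt (1 + a + t ^ 2)

lemma hpos (a t : ℝ) (ha : 0 < a) : (0:ℝ) < 1 + a + t ^ 2 := by positivity

lemma habs (a t : ℝ) (ha : 0 < a) : |t| < Real.sqrt (1 + a + t ^ 2) := by
  rw [← Real.sqrt_sq_eq_abs]
  exact Real.sqrt_lt_sqrt (sq_nonneg t) (by linarith)

lemma hts (a t : ℝ) (ha : 0 < a) : 0 < t + Real.sqrt (1 + a + t ^ 2) := by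
  have := habs a t ha
  have := neg_abs_le t
  linarith

lemma hasDerivAt_Fnil (a t : ℝ) (ha : 0 < a) :
    HasDerivAt (Fnil a) (Real.sqrt (1 + a + t ^ 2)) t := by
  set s := Real.sqrt (1 + a + t ^ 2) with hs
  have hsp : 0 < s := Real.sqrt_pos.2 (hpos a t ha)
  have hssq : s ^ 2 = 1 + a + t ^ 2 := Real.sq_sqrt (hpos a t ha).le
  have htsp : 0 < t + s := hts a t ha
  have hin : HasDerivAt (fun u : ℝ => 1 + a + u ^ 2) (2 * t) t := by
    simpa using ((hasDerivAt_pow 2 t).const_add (1 + a))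
  have hsq : HasDerivAt (fun u : ℝ => Real.sqrt (1 + a + u ^ 2)) (2 * t / (2 * s)) t :=
    hin.sqrt (by positivity)
  have hsum : HasDerivAt (fun u : ℝ => u + Real.sqrt (1 + a + u ^ 2)) (1 + 2 * t / (2 * s)) t :=
    (hasDerivAt_id t).add hsq
  have hlog : HasDerivAt (fun u : ℝ => Real.log (u + Real.sqrt (1 + a + u ^ 2)))
      ((1 + 2 * t / (2 * s)) / (t + s)) t := hsum.log htsp.ne'
  have hmul : HasDerivAt (fun u : ℝ => (1 / 2) * u * Real.sqrt (1 + a + u ^ 2))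
      ((1/2) * s + ((1/2) * t) * (2 * t / (2 * s))) t := by
    have := (((hasDerivAt_id t).const_mul (1/2 : ℝ)).mul hsq)
    exact this.congr_deriv (by simp only [id, hs]; ring)
  have := (hlog.const_mul ((1/2) * (1 + a))).add hmul
  refine this.congr_deriv ?_
  symm
  have h1 : (1 : ℝ) + a = s ^ 2 - t ^ 2 := by linarith
  rw [h1]
  field_simp
  ring

lemma Fnil_strictMono (a : ℝ) (ha : 0 < a) : StrictMono (Fnil a) :=
  strictMono_of_deriv_pos fun t => by
    rw [(hasDerivAt_Fnil a t ha).deriv]; exact Real.sqrt_pos.2 (hpos a t ha)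

lemma Fnil_diff (a : ℝ) (ha : 0 < a) : Differentiable ℝ (Fnil a) :=
  fun t => (hasDerivAt_Fnil a t ha).differentiableAt

lemma Fnil_atTop (a : ℝ) (ha : 0 < a) : Tendsto (Fnil a) atTop atTop := by
  have h : ∀ᶠ t in atTop,
      (1/2) * (1 + a) * Real.log (Real.sqrt (1 + a)) + t ^ 2 / 2 ≤ Fnil a t := by
    filter_upwards [eventually_ge_atTop (0:ℝ)] with t ht
    have hsp := Real.sqrt_pos.2 (hpos a t ha)
    have hge : Real.sqrt (1 + a) ≤ Real.sqrt (1 + a + t ^ 2) :=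
      Real.sqrt_le_sqrt (by nlinarith)
    have hlog : Real.log (Real.sqrt (1 + a)) ≤ Real.log (t + Real.sqrt (1 + a + t ^ 2)) := by
      apply Real.log_le_log (Real.sqrt_pos.2 (by linarith))
      linarith
    have habs' := habs a t ha
    have ht2 : t ≤ Real.sqrt (1 + a + t ^ 2) := by
      have := le_abs_self t; linarith
    have hterm : t ^ 2 / 2 ≤ (1/2) * t * Real.sqrt (1 + a + t ^ 2) := by nlinarith
    have hc : (1/2) * (1 + a) * Real.log (Real.sqrt (1 + a)) ≤
        (1/2) * (1 + a) * Real.log (t + Real.sqrt (1 + a + t ^ 2)) :=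
      mul_le_mul_of_nonneg_left hlog (by linarith)
    simp only [Fnil]
    linarith
  apply tendsto_atTop_mono' _ h
  apply tendsto_atTop_add_const_left
  exact (tendsto_pow_atTop (two_ne_zero)).atTop_div_const (by norm_num)

lemma Fnil_atBot (a : ℝ) (ha : 0 < a) : Tendsto (Fnil a) atBot atBot := by
  set r : ℝ := Real.sqrt (1 + a) with hr
  have hrp : 0 < r := Real.sqrt_pos.2 (by linarith)
  have hrsq : r ^ 2 = 1 + a := Real.sq_sqrt (by linarith)
  have h : ∀ᶠ t in atBot, Fnil a t ≤ (1/2) * (1 + a) * Real.log r + (r / 2) * t := by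
    filter_upwards [eventually_le_atBot (0:ℝ)] with t ht
    set s := Real.sqrt (1 + a + t ^ 2) with hs
    have hsp : 0 < s := Real.sqrt_pos.2 (hpos a t ha)
    have hssq : s ^ 2 = 1 + a + t ^ 2 := Real.sq_sqrt (hpos a t ha).le
    have hrs : r ≤ s := Real.sqrt_le_sqrt (by nlinarith)
    have htsp : 0 < t + s := hts a t ha
    have hkey : t + s ≤ r := by nlinarith [mul_nonneg (neg_nonneg.2 ht) hrp.le]
    have hlog : Real.log (t + s) ≤ Real.log r := Real.log_le_log htsp hkey
    have hterm : (1/2) * t * s ≤ (r / 2) * t := by nlinarith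
    have hc : (1/2) * (1 + a) * Real.log (t + s) ≤ (1/2) * (1 + a) * Real.log r :=
      mul_le_mul_of_nonneg_left hlog (by linarith)
    simp only [Fnil, ← hs]
    linarith
  apply tendsto_atBot_mono' _ h
  apply tendsto_atBot_add_const_left
  exact (tendsto_id.const_mul_atBot (by positivity))

lemma Fnil_surj (a : ℝ) (ha : 0 < a) : Function.Surjective (Fnil a) :=
  (Fnil_diff a ha).continuous.surjective (Fnil_atTop a ha) (Fnil_atBot a ha)

lemma invFnil_continuous (a : ℝ) (ha : 0 < a) : Continuous (Function.invFun (Fnil a)) := by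
  have hsurj := Fnil_surj a ha
  have hmono := Fnil_strictMono a ha
  let e : ℝ ≃o ℝ := StrictMono.orderIsoOfSurjective (Fnil a) hmono hsurj
  have heq : Function.invFun (Fnil a) = ⇑e.symm := by
    funext x
    apply hmono.injective
    rw [Function.invFun_eq (hsurj x)]
    exact (e.apply_symm_apply x).symm
  rw [heq]
  exact e.symm.continuous

lemma hasDerivAt_inv_Fnil (a x : ℝ) (ha : 0 < a) :
    HasDerivAt (Function.invFun (Fnil a))
      (Real.sqrt (1 + a + (Function.invFun (Fnil a) x) ^ 2))⁻¹ x := by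
  have hsurj := Fnil_surj a ha
  refine HasDerivAt.of_local_left_inverse ((invFnil_continuous a ha).continuousAt)
    (hasDerivAt_Fnil a _ ha) (Real.sqrt_pos.2 (hpos a _ ha)).ne' ?_
  exact Eventually.of_forall fun y => Function.invFun_eq (hsurj y)

theorem nil_y_solves_ode (a c₁ : ℝ) (ha : 0 < a) :
    let f : ℝ → ℝ := fun t =>
      (1 / 2) * (1 + a) * Real.log (t + Real.sqrt (1 + a + t ^ 2)) +
      (1 / 2) * t * Real.sqrt (1 + a + t ^ 2)
    let y : ℝ → ℝ := fun t => Function.invFun f (Real.sqrt a * t + c₁)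
    Differentiable ℝ y ∧
      ∀ t : ℝ,
        (1 + y t ^ 2) * (deriv y t) ^ 2 / (1 - (deriv y t) ^ 2) = a ∧
        (deriv y t) ^ 2 = a / (1 + a + y t ^ 2) := by
  intro f y
  have hf : f = Fnil a := rfl
  have hu : ∀ t : ℝ, HasDerivAt (fun t : ℝ => Real.sqrt a * t + c₁) (Real.sqrt a) t := by
    intro t
    simpa using ((hasDerivAt_id t).const_mul (Real.sqrt a)).add_const c₁
  have hy : ∀ t : ℝ, HasDerivAt y
      ((Real.sqrt (1 + a + (y t) ^ 2))⁻¹ * Real.sqrt a) t := by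
    intro t
    exact HasDerivAt.comp t (hasDerivAt_inv_Fnil a _ ha) (hu t)
  refine ⟨fun t => (hy t).differentiableAt, fun t => ?_⟩
  have hd : deriv y t = (Real.sqrt (1 + a + (y t) ^ 2))⁻¹ * Real.sqrt a := (hy t).deriv
  have hD : (0:ℝ) < 1 + a + (y t) ^ 2 := hpos a _ ha
  have hsq : (Real.sqrt (1 + a + (y t) ^ 2)) ^ 2 = 1 + a + (y t) ^ 2 := Real.sq_sqrt hD.le
  have hasq : (Real.sqrt a) ^ 2 = a := Real.sq_sqrt ha.le
  have h2 : (deriv y t) ^ 2 = a / (1 + a + y t ^ 2) := by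
    rw [hd, mul_pow, inv_pow, hsq, hasq]
    ring
  refine ⟨?_, h2⟩
  have h3 : 1 - (deriv y t) ^ 2 = (1 + y t ^ 2) / (1 + a + y t ^ 2) := by
    rw [h2]; field_simp; ring
  have hyp : (0:ℝ) < 1 + y t ^ 2 := by positivity
  rw [h3, h2]
  field_simp
end

section
/- For every c ≥ 1, and all x, y, θ ∈ ℝ: |[1+c² + (1−c²)cos(2θ)]·(x sin θ − c² y cos θ)| / (2(c² + x² + c⁴y²)) ≤ c/2. In particular the right-hand side of the ODE θ' = [1+c²+(1−c²)cos(2θ)](x sin θ − c² y cos θ)/(2(c²+x²+c⁴y²)) is bounded by c/2. -/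
open Real

theorem theta_deriv_bound_E2c (c : ℝ) (hc : 1 ≤ c) (x y θ : ℝ) :
    |(1 + c ^ 2 + (1 - c ^ 2) * Real.cos (2 * θ)) * (x * Real.sin θ - c ^ 2 * y * Real.cos θ)| /
      (2 * (c ^ 2 + x ^ 2 + c ^ 4 * y ^ 2)) ≤ c / 2 := by
  have hc0 : (0:ℝ) < c := by linarith
  have hD : (0:ℝ) < 2 * (c ^ 2 + x ^ 2 + c ^ 4 * y ^ 2) := by positivity
  rw [div_le_div_iff₀ hD two_pos]
  set A := 1 + c ^ 2 + (1 - c ^ 2) * Real.cos (2 * θ) with hAdef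
  set B := x * Real.sin θ - c ^ 2 * y * Real.cos θ with hBdef
  have hcos1 : Real.cos (2 * θ) ≤ 1 := Real.cos_le_one _
  have hcos2 : -1 ≤ Real.cos (2 * θ) := Real.neg_one_le_cos _
  have hA : |A| ≤ 2 * c ^ 2 := by
    rw [abs_le]
    constructor <;> nlinarith [sq_nonneg c, sq_nonneg (c - 1)]
  have hB2 : B ^ 2 ≤ x ^ 2 + c ^ 4 * y ^ 2 := by
    rw [hBdef]
    nlinarith [Real.sin_sq_add_cos_sq θ, sq_nonneg (x * Real.cos θ + c ^ 2 * y * Real.sin θ)]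
  have hBabs : B ^ 2 = |B| ^ 2 := (sq_abs B).symm
  have hB : 2 * c * |B| ≤ c ^ 2 + x ^ 2 + c ^ 4 * y ^ 2 := by
    nlinarith [sq_nonneg (c - |B|), abs_nonneg B]
  rw [abs_mul]
  nlinarith [abs_nonneg A, abs_nonneg B, mul_le_mul_of_nonneg_left hB (le_of_lt hc0),
    mul_le_mul_of_nonneg_right hA (abs_nonneg B)]
end

section
/- Let (x,y,θ) solve x' = cos θ, y' = sin θ, (y cos θ − x sin θ)θ' = −1 with initial data (x₀,y₀,θ₀), and set a = 2(x₀cos θ₀ + y₀sin θ₀). If a ≠ 0, then the maximal interval of definition of the solution is contained in [−(x₀²+y₀²)/a, ∞) if a > 0, and in (−∞, −(x₀²+y₀²)/a] if a < 0; in particular, no solution with a ≠ 0 is defined on all of ℝ. -/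
open Real Set

lemma deriv_zero_const_on_convex (I : Set ℝ) (hI : Convex ℝ I) (f : ℝ → ℝ)
    (hf : ∀ t ∈ I, HasDerivAt f 0 t) {s t : ℝ} (hs : s ∈ I) (ht : t ∈ I) :
    f s = f t := by
  have h := hI.norm_image_sub_le_of_norm_hasFDerivWithin_le
    (f' := fun _ => (ContinuousLinearMap.smulRight (1 : ℝ →L[ℝ] ℝ) (0 : ℝ)))
    (fun u hu => ((hf u hu).hasFDerivAt.hasFDerivWithinAt)) (C := 0)
    (fun u hu => by simp) hs ht
  simpa [sub_eq_zero, eq_comm] using h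

/-- Any interval of definition of a solution of the zero-Gaussian-curvature system in flat
Ẽ(2) with a = 2(x₀cos θ₀ + y₀sin θ₀) ≠ 0 is contained in the stated half-line; in
particular no such solution is defined on all of ℝ. -/
theorem flat_E2_not_complete (I : Set ℝ) (hI : Convex ℝ I) (h0 : (0 : ℝ) ∈ I)
    (x y θ θ' : ℝ → ℝ) (x₀ y₀ θ₀ a : ℝ)
    (hx0 : x 0 = x₀) (hy0 : y 0 = y₀) (hθ0 : θ 0 = θ₀)
    (ha : a = 2 * (x₀ * Real.cos θ₀ + y₀ * Real.sin θ₀)) (hane : a ≠ 0)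
    (hx : ∀ t ∈ I, HasDerivAt x (Real.cos (θ t)) t)
    (hy : ∀ t ∈ I, HasDerivAt y (Real.sin (θ t)) t)
    (hθ : ∀ t ∈ I, HasDerivAt θ (θ' t) t)
    (hK : ∀ t ∈ I, (y t * Real.cos (θ t) - x t * Real.sin (θ t)) * θ' t = -1) :
    ((0 < a → I ⊆ Set.Ici (-(x₀ ^ 2 + y₀ ^ 2) / a)) ∧
     (a < 0 → I ⊆ Set.Iic (-(x₀ ^ 2 + y₀ ^ 2) / a))) ∧
    I ≠ Set.univ := by
  set F : ℝ → ℝ := fun t => x t * Real.cos (θ t) + y t * Real.sin (θ t) with hF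
  have hF' : ∀ t ∈ I, HasDerivAt F 0 t := by
    intro t ht
    have D := ((hx t ht).mul ((hθ t ht).cos)).add ((hy t ht).mul ((hθ t ht).sin))
    have hval : Real.cos (θ t) * Real.cos (θ t) + x t * (-Real.sin (θ t) * θ' t)
        + (Real.sin (θ t) * Real.sin (θ t) + y t * (Real.cos (θ t) * θ' t)) = 0 := by
      have h1 := hK t ht
      have h2 := Real.sin_sq_add_cos_sq (θ t)
      nlinarith
    rwa [hval] at D
  have hFconst : ∀ t ∈ I, F t = a / 2 := by
    intro t ht
    have := deriv_zero_const_on_convex I hI F hF' ht h0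
    rw [this]
    simp only [hF, hx0, hy0, hθ0, ha]; ring
  set G : ℝ → ℝ := fun t => x t ^ 2 + y t ^ 2 - a * t with hG
  have hG' : ∀ t ∈ I, HasDerivAt G 0 t := by
    intro t ht
    have D := (((hx t ht).pow 2).add ((hy t ht).pow 2)).sub
      ((hasDerivAt_id t).const_mul a)
    have hFc := hFconst t ht
    simp only [hF] at hFc
    refine D.congr_deriv ?_
    norm_num
    linarith
  have key : ∀ t ∈ I, x t ^ 2 + y t ^ 2 = a * t + (x₀ ^ 2 + y₀ ^ 2) := by
    intro t ht
    have := deriv_zero_const_on_convex I hI G hG' ht h0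
    simp only [hG, hx0, hy0, mul_zero, sub_zero] at this
    linarith
  have hpos : ∀ t ∈ I, 0 ≤ a * t + (x₀ ^ 2 + y₀ ^ 2) := by
    intro t ht
    rw [← key t ht]; positivity
  have main : (0 < a → I ⊆ Set.Ici (-(x₀ ^ 2 + y₀ ^ 2) / a)) ∧
      (a < 0 → I ⊆ Set.Iic (-(x₀ ^ 2 + y₀ ^ 2) / a)) := by
    constructor
    · intro hap t ht
      have := hpos t ht
      rw [Set.mem_Ici, div_le_iff₀ hap]
      linarith
    · intro han t ht
      have := hpos t ht
      rw [Set.mem_Iic, le_div_iff_of_neg han]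
      linarith
  refine ⟨main, ?_⟩
  intro hIuniv
  rcases lt_or_gt_of_ne hane with han | hap
  · have := main.2 han (hIuniv ▸ Set.mem_univ (-(x₀ ^ 2 + y₀ ^ 2) / a + 1))
    simp only [Set.mem_Iic] at this; linarith
  · have := main.1 hap (hIuniv ▸ Set.mem_univ (-(x₀ ^ 2 + y₀ ^ 2) / a - 1))
    simp only [Set.mem_Ici] at this; linarith
end
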